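/- Let ι be a nonempty directed index set with filter l, let r : ι → (0,∞) satisfy r_λ → +∞, and for each λ let P_λ, P̂_λ be mutually absolutely continuous probability measures with entropy production σ_λ := log(dP_λ/dP̂_λ). Assume: (i) the laws of r_λ^{−1}σ_λ under P_λ and under P̂_λ satisfy the full large deviation principle with scale r_λ and convex, lower semicontinuous rate functions I and Î respectively (upper and lower LDP bounds for all Borel subsets of ℝ); (ii) the entropic pressure e(α) := sup_{s∈ℝ}(αs − I(−s)) satisfies e(α) = lim_λ r_λ^{−1} log ∫ e^{−ασ_λ} dP_λ for every α ∈ [0,1]. Then for every u ∈ ℝ the three Hoeffding error exponents coincide and equal −f(u), where f(u) := sup_{α∈(0,1]} α^{−1}(−(1−α)u − e(α)); here 𝔥̲(u) (resp. 𝔥̄(u)) is the infimum of liminf_λ r_λ^{−1} log P̂_λ(Γ_λ) (resp. of limsup_λ r_λ^{−1} log P̂_λ(Γ_λ)) over all families of measurable sets (Γ_λ)_λ with limsup_λ r_λ^{−1} log P_λ(Γ_λᶜ) < −u, and 𝔥(u) is the infimum of lim_λ r_λ^{−1} log P̂_λ(Γ_λ) over those such families for which this limit exists. -/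

import Mathlib

open MeasureTheory Filter
open scoped ENNReal

/-- The entropy production observable of a pair of measures:
`σ(x) = log (dP/dQ)(x)`. -/
noncomputable def entropyProduction {Ω : Type*} [MeasurableSpace Ω]
    (P Q : Measure Ω) (x : Ω) : ℝ :=
  Real.log ((P.rnDeriv Q x).toReal)

namespace HoeffdingAux

lemma coe_ennreal_fin {x : ℝ≥0∞} (hx : x ≠ ⊤) :
    (x : EReal) = ((x.toReal : ℝ) : EReal) := by
  rw [← EReal.toReal_coe_ennreal]
  exact (EReal.coe_toReal (by simpa using hx) (by
    exact ne_of_gt (lt_of_lt_of_le EReal.bot_lt_zero (EReal.coe_ennreal_nonneg x)))).symm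

lemma ereal_top_forall {a : EReal} (h : ∀ c : ℝ, (c : EReal) ≤ a) : a = ⊤ := by
  by_contra hne
  obtain ⟨c, hc1, hc2⟩ := EReal.exists_between_coe_real (lt_top_iff_ne_top.2 hne)
  exact absurd (h c) (not_le.2 hc1)

lemma ereal_le_forall {a b : EReal} (h : ∀ c : ℝ, (c : EReal) < a → (c : EReal) ≤ b) : a ≤ b := by
  refine le_of_forall_lt fun c hc => ?_
  obtain ⟨d, hd1, hd2⟩ := EReal.exists_between_coe_real hc
  exact lt_of_lt_of_le hd1 (h d hd2)

lemma pos_mul_coe (c x : ℝ) : (c : EReal) * (x : EReal) = ((c * x : ℝ) : EReal) :=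
  (EReal.coe_mul c x).symm

lemma pos_mul_add {c : ℝ} (hc : 0 < c) (x : ℝ) (y : EReal) :
    (c : EReal) * ((x : EReal) + y) = ((c * x : ℝ) : EReal) + (c : EReal) * y := by
  induction y using EReal.rec with
  | bot => rw [EReal.add_bot, EReal.coe_mul_bot_of_pos hc, EReal.add_bot]
  | coe z => rw [← EReal.coe_add, pos_mul_coe, pos_mul_coe, ← EReal.coe_add, mul_add]
  | top => rw [EReal.add_top_of_ne_bot (EReal.coe_ne_bot _), EReal.coe_mul_top_of_pos hc,
      EReal.add_top_of_ne_bot (EReal.coe_ne_bot _)]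

lemma pos_mul_lt_iff {c : ℝ} (hc : 0 < c) {y : EReal} {z : ℝ} :
    (c : EReal) * y < (z : EReal) ↔ y < ((z / c : ℝ) : EReal) := by
  induction y using EReal.rec with
  | bot => simp [EReal.coe_mul_bot_of_pos hc]
  | coe w =>
      rw [pos_mul_coe, EReal.coe_lt_coe_iff, EReal.coe_lt_coe_iff, lt_div_iff₀ hc, mul_comm]
  | top => simp [EReal.coe_mul_top_of_pos hc]

lemma lt_pos_mul_iff {c : ℝ} (hc : 0 < c) {y : EReal} {z : ℝ} :
    (z : EReal) < (c : EReal) * y ↔ ((z / c : ℝ) : EReal) < y := by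
  induction y using EReal.rec with
  | bot => simp [EReal.coe_mul_bot_of_pos hc]
  | coe w =>
      rw [pos_mul_coe, EReal.coe_lt_coe_iff, EReal.coe_lt_coe_iff, div_lt_iff₀ hc, mul_comm]
  | top => simp [EReal.coe_mul_top_of_pos hc]

lemma pos_mul_le_mono {c : ℝ} (hc : 0 ≤ c) {x y : EReal} (h : x ≤ y) :
    (c : EReal) * x ≤ (c : EReal) * y :=
  mul_le_mul_of_nonneg_left h (by exact_mod_cast hc)

end HoeffdingAux

set_option linter.unusedSectionVars false
set_option linter.unusedVariables false
section Meas

open HoeffdingAux MeasureTheory Filter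
open scoped ENNReal

variable {Ω : Type*} [MeasurableSpace Ω] (P Q : Measure Ω)
  [IsProbabilityMeasure P] [IsProbabilityMeasure Q]

lemma measurable_entropyProduction : Measurable (entropyProduction P Q) :=
  Real.measurable_log.comp (Measure.measurable_rnDeriv P Q).ennreal_toReal

variable {P Q}

lemma rnDeriv_eq_exp_neg (hPQ : P ≪ Q) (hQP : Q ≪ P) :
    (fun x => ENNReal.ofReal (Real.exp (-entropyProduction P Q x))) =ᵐ[P] Q.rnDeriv P := by
  have h1 := Measure.inv_rnDeriv hPQ
  have h2 := Measure.rnDeriv_pos hPQ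
  have h3 : ∀ᵐ x ∂P, P.rnDeriv Q x < ⊤ :=
    hPQ.ae_le (Measure.rnDeriv_lt_top P Q)
  filter_upwards [h1, h2, h3] with x hx1 hx2 hx3
  have htR : 0 < (P.rnDeriv Q x).toReal := ENNReal.toReal_pos hx2.ne' hx3.ne
  rw [← hx1]
  simp only [entropyProduction, Real.exp_neg, Real.exp_log htR, Pi.inv_apply]
  rw [ENNReal.ofReal_inv_of_pos htR, ENNReal.ofReal_toReal hx3.ne]

lemma meas_le_of_entropy_ge (hPQ : P ≪ Q) (hQP : Q ≪ P)
    {A : Set Ω} (hA : MeasurableSet A) {c : ℝ}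
    (hc : ∀ x ∈ A, c ≤ entropyProduction P Q x) :
    Q A ≤ ENNReal.ofReal (Real.exp (-c)) * P A := by
  have h0 : Q A = ∫⁻ x in A, ENNReal.ofReal (Real.exp (-entropyProduction P Q x)) ∂P := by
    rw [← Measure.setLIntegral_rnDeriv hQP A]
    exact (lintegral_congr_ae (ae_restrict_of_ae (rnDeriv_eq_exp_neg hPQ hQP))).symm
  rw [h0]
  calc ∫⁻ x in A, ENNReal.ofReal (Real.exp (-entropyProduction P Q x)) ∂P
      ≤ ∫⁻ _ in A, ENNReal.ofReal (Real.exp (-c)) ∂P := by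
        refine setLIntegral_mono measurable_const fun x hx => ?_
        exact ENNReal.ofReal_le_ofReal (Real.exp_le_exp.2 (neg_le_neg (hc x hx)))
    _ = ENNReal.ofReal (Real.exp (-c)) * P A := setLIntegral_const _ _

lemma meas_ge_of_entropy_le (hPQ : P ≪ Q) (hQP : Q ≪ P)
    {A : Set Ω} (hA : MeasurableSet A) {c : ℝ}
    (hc : ∀ x ∈ A, entropyProduction P Q x ≤ c) :
    ENNReal.ofReal (Real.exp (-c)) * P A ≤ Q A := by
  have h0 : Q A = ∫⁻ x in A, ENNReal.ofReal (Real.exp (-entropyProduction P Q x)) ∂P := by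
    rw [← Measure.setLIntegral_rnDeriv hQP A]
    exact (lintegral_congr_ae (ae_restrict_of_ae (rnDeriv_eq_exp_neg hPQ hQP))).symm
  rw [h0, ← setLIntegral_const A (ENNReal.ofReal (Real.exp (-c)))]
  refine setLIntegral_mono ((ENNReal.measurable_ofReal.comp
    (Real.measurable_exp.comp (measurable_entropyProduction P Q).neg))) fun x hx => ?_
  exact ENNReal.ofReal_le_ofReal (Real.exp_le_exp.2 (neg_le_neg (hc x hx)))

lemma chernoff_P (hPQ : P ≪ Q) {α : ℝ} (hα : 0 ≤ α) (c : ℝ) :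
    P {x | entropyProduction P Q x < c}
      ≤ ENNReal.ofReal (Real.exp (α * c)) *
        ∫⁻ x, ENNReal.ofReal (Real.exp (-α * entropyProduction P Q x)) ∂P := by
  set σ := entropyProduction P Q with hσdef
  have hσ : Measurable σ := measurable_entropyProduction P Q
  have hmeas : Measurable fun x => ENNReal.ofReal (Real.exp (-α * σ x)) :=
    ENNReal.measurable_ofReal.comp (Real.measurable_exp.comp (hσ.const_mul (-α)))
  have hS : MeasurableSet {x | σ x < c} := measurableSet_lt hσ measurable_const
  calc P {x | σ x < c} = ∫⁻ _ in {x | σ x < c}, 1 ∂P := (setLIntegral_one _).symm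
    _ ≤ ∫⁻ x in {x | σ x < c},
          ENNReal.ofReal (Real.exp (α * c)) * ENNReal.ofReal (Real.exp (-α * σ x)) ∂P := by
        refine setLIntegral_mono (measurable_const.mul hmeas) fun x hx => ?_
        rw [← ENNReal.ofReal_mul (Real.exp_pos _).le, ← Real.exp_add]
        rw [← ENNReal.ofReal_one]
        refine ENNReal.ofReal_le_ofReal ?_
        rw [← Real.exp_zero]
        refine Real.exp_le_exp.2 ?_
        have hx' : σ x < c := hx
        nlinarith [mul_nonneg hα (by linarith : (0:ℝ) ≤ c - σ x)]
    _ = ENNReal.ofReal (Real.exp (α * c)) *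
          ∫⁻ x in {x | σ x < c}, ENNReal.ofReal (Real.exp (-α * σ x)) ∂P :=
        lintegral_const_mul _ hmeas
    _ ≤ _ := mul_le_mul_right (setLIntegral_le_lintegral _ _) _

lemma chernoff_Q (hPQ : P ≪ Q) (hQP : Q ≪ P) {α : ℝ} (hα : 0 ≤ α) (hα1 : α ≤ 1) (c : ℝ) :
    Q {x | c ≤ entropyProduction P Q x}
      ≤ ENNReal.ofReal (Real.exp (-((1 - α) * c))) *
        ∫⁻ x, ENNReal.ofReal (Real.exp (-α * entropyProduction P Q x)) ∂P := by
  set σ := entropyProduction P Q with hσdef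
  have hσ : Measurable σ := measurable_entropyProduction P Q
  have hmeas : Measurable fun x => ENNReal.ofReal (Real.exp (-α * σ x)) :=
    ENNReal.measurable_ofReal.comp (Real.measurable_exp.comp (hσ.const_mul (-α)))
  have hS : MeasurableSet {x | c ≤ σ x} := measurableSet_le measurable_const hσ
  have h0 : Q {x | c ≤ σ x} = ∫⁻ x in {x | c ≤ σ x}, ENNReal.ofReal (Real.exp (-σ x)) ∂P := by
    rw [← Measure.setLIntegral_rnDeriv hQP]
    exact (lintegral_congr_ae (ae_restrict_of_ae (rnDeriv_eq_exp_neg hPQ hQP))).symm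
  rw [h0]
  calc ∫⁻ x in {x | c ≤ σ x}, ENNReal.ofReal (Real.exp (-σ x)) ∂P
      ≤ ∫⁻ x in {x | c ≤ σ x},
          ENNReal.ofReal (Real.exp (-((1 - α) * c))) * ENNReal.ofReal (Real.exp (-α * σ x)) ∂P := by
        refine setLIntegral_mono (measurable_const.mul hmeas) fun x hx => ?_
        rw [← ENNReal.ofReal_mul (Real.exp_pos _).le, ← Real.exp_add]
        refine ENNReal.ofReal_le_ofReal (Real.exp_le_exp.2 ?_)
        have hx' : c ≤ σ x := hx
        nlinarith [mul_le_mul_of_nonneg_left hx' (by linarith : (0:ℝ) ≤ 1 - α)]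
    _ = ENNReal.ofReal (Real.exp (-((1 - α) * c))) *
          ∫⁻ x in {x | c ≤ σ x}, ENNReal.ofReal (Real.exp (-α * σ x)) ∂P :=
        lintegral_const_mul _ hmeas
    _ ≤ _ := mul_le_mul_right (setLIntegral_le_lintegral _ _) _

lemma integral_exp_neg_entropy (hPQ : P ≪ Q) (hQP : Q ≪ P) :
    ∫⁻ x, ENNReal.ofReal (Real.exp (-(1:ℝ) * entropyProduction P Q x)) ∂P = 1 := by
  have : ∫⁻ x, ENNReal.ofReal (Real.exp (-(1:ℝ) * entropyProduction P Q x)) ∂P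
      = ∫⁻ x, Q.rnDeriv P x ∂P := by
    refine lintegral_congr_ae ?_
    filter_upwards [rnDeriv_eq_exp_neg hPQ hQP] with x hx
    rw [← hx]; norm_num
  rw [this, Measure.lintegral_rnDeriv hQP]
  simp

end Meas

namespace HoeffdingAux

open Set

lemma exists_line (I : ℝ → ℝ≥0∞)
    (hIconv : ∀ x y p q : ℝ, 0 ≤ p → 0 ≤ q → p + q = 1 →
      I (p * x + q * y) ≤ ENNReal.ofReal p * I x + ENNReal.ofReal q * I y)
    (hIneg : ∀ t : ℝ, ((-t : ℝ) : EReal) ≤ (I t : EReal))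
    {u u' c : ℝ} (huu' : u < u') (hu : 0 ≤ u) (hc : 0 < c)
    (H : ∀ t : ℝ, I t < ENNReal.ofReal u' → c ≤ t + (I t).toReal) :
    ∃ α : ℝ, 0 < α ∧ α ≤ 1 ∧
      ∀ t : ℝ, (((1 - α) * u + α * c - α * t : ℝ) : EReal) ≤ (I t : EReal) := by
  set p : ℝ := c - u with hp
  have hup : u + p = c := by rw [hp]; ring
  have hden : 0 < c + u' - u := by linarith
  set δ : ℝ := (u' - u) / (c + u' - u) with hδ
  have hδpos : 0 < δ := div_pos (by linarith) hden
  have hδlt1 : δ < 1 := (div_lt_one hden).2 (by linarith)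
  have hδ1 : (1 - δ) * (c + u' - u) = c := by
    rw [hδ]
    field_simp
    ring
  have hfin : ∀ t : ℝ, I t < ENNReal.ofReal u' → I t ≠ ⊤ := fun t h => h.ne_top
  have hF1 : ∀ t : ℝ, I t < ENNReal.ofReal u' → ((u + (p - t) : ℝ) : EReal) ≤ (I t : EReal) := by
    intro t ht
    rw [coe_ennreal_fin (hfin t ht), EReal.coe_le_coe_iff]
    have := H t ht
    linarith
  have hF2 : ∀ t : ℝ, ENNReal.ofReal u' ≤ I t → ((u' : ℝ) : EReal) ≤ (I t : EReal) := by
    intro t ht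
    calc ((u' : ℝ) : EReal) = (ENNReal.ofReal u' : EReal) := by
          rw [EReal.coe_ennreal_ofReal, max_eq_left (by linarith)]
      _ ≤ (I t : EReal) := EReal.coe_ennreal_le_coe_ennreal_iff.2 ht
  have hCL : ∀ t : ℝ, t ≤ p → ((u + δ * (p - t) : ℝ) : EReal) ≤ (I t : EReal) := by
    intro t htp
    have hpt : 0 ≤ p - t := by linarith
    by_cases hIt : I t < ENNReal.ofReal u'
    · refine le_trans ?_ (hF1 t hIt)
      rw [EReal.coe_le_coe_iff]
      nlinarith
    · push_neg at hIt
      by_cases hsm : δ * (p - t) ≤ u' - u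
      · refine le_trans ?_ (hF2 t hIt)
        rw [EReal.coe_le_coe_iff]; linarith
      · push_neg at hsm
        have hsm' : c + u' - u < p - t := by
          have hδeq : δ * (p - t) = (u' - u) * (p - t) / (c + u' - u) := by
            rw [hδ]; ring
          rw [hδeq, lt_div_iff₀ hden] at hsm
          have := lt_of_mul_lt_mul_left (a := u' - u)
            (by nlinarith : (u' - u) * (c + u' - u) < (u' - u) * (p - t)) (by linarith)
          exact this
        have h3 : c ≤ (1 - δ) * (p - t) := by
          calc c = (1 - δ) * (c + u' - u) := hδ1.symm
            _ ≤ (1 - δ) * (p - t) := by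
                apply mul_le_mul_of_nonneg_left (by linarith) (by linarith)
        refine le_trans ?_ (hIneg t)
        rw [EReal.coe_le_coe_iff]
        nlinarith
  have hCR : ∀ t : ℝ, p ≤ t → ((u - (t - p) : ℝ) : EReal) ≤ (I t : EReal) := by
    intro t htp
    by_cases hIt : I t < ENNReal.ofReal u'
    · refine le_trans ?_ (hF1 t hIt)
      rw [EReal.coe_le_coe_iff]; linarith
    · push_neg at hIt
      refine le_trans ?_ (hF2 t hIt)
      rw [EReal.coe_le_coe_iff]; linarith
  have hCP : ((u : ℝ) : EReal) ≤ (I p : EReal) := by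
    have := hCR p le_rfl
    simpa using this
  -- the set of right difference quotients
  set S₂ : Set ℝ := {q : ℝ | ∃ t : ℝ, p < t ∧ I t ≠ ⊤ ∧ q = ((I t).toReal - u) / (t - p)}
    with hS₂
  have hS₂lb : ∀ q ∈ S₂, -1 ≤ q := by
    rintro q ⟨t, htp, htop, rfl⟩
    have h1 : ((u - (t - p) : ℝ) : EReal) ≤ (I t : EReal) := hCR t htp.le
    rw [coe_ennreal_fin htop, EReal.coe_le_coe_iff] at h1
    rw [le_div_iff₀ (by linarith : (0:ℝ) < t - p)]
    linarith
  have hbdd : BddBelow S₂ := ⟨-1, hS₂lb⟩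
  by_cases hcase : S₂.Nonempty ∧ sInf S₂ < -δ
  · -- use α = -sInf S₂
    obtain ⟨hne, hlt⟩ := hcase
    set β : ℝ := sInf S₂ with hβ
    have hβlb : -1 ≤ β := le_csInf hne hS₂lb
    refine ⟨-β, by linarith, by linarith, ?_⟩
    have hline : ∀ t : ℝ, (1 - -β) * u + -β * c - -β * t = u - β * (p - t) := by
      intro t; rw [hp]; ring
    intro t
    rw [hline t]
    rcases lt_trichotomy t p with htp | htp | htp
    · -- left side : use convexity through the quotients
      by_cases htop : I t = ⊤
      · rw [htop, EReal.coe_ennreal_top]; exact le_top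
      · rw [coe_ennreal_fin htop, EReal.coe_le_coe_iff]
        set A : ℝ := (I t).toReal with hA
        -- show (A - u)/(t - p) ≤ β
        have hq : (A - u) / (t - p) ≤ β := by
          refine le_csInf hne ?_
          rintro q ⟨t₂, ht₂p, ht₂top, rfl⟩
          set B : ℝ := (I t₂).toReal with hB
          set d₁ : ℝ := p - t with hd₁
          set d₂ : ℝ := t₂ - p with hd₂
          have hd₁pos : 0 < d₁ := by rw [hd₁]; linarith
          have hd₂pos : 0 < d₂ := by rw [hd₂]; linarith
          set θ : ℝ := d₂ / (d₁ + d₂) with hθ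
          have hθpos : 0 < θ := div_pos hd₂pos (by linarith)
          have hθle : θ ≤ 1 := by
            rw [hθ, div_le_one (by linarith)]; linarith
          have htt : t₂ - t ≠ 0 := by intro h; nlinarith
          have hmean : p = θ * t + (1 - θ) * t₂ := by
            rw [hθ, hd₁, hd₂]; field_simp [htt]; ring
          have hconv := hIconv t t₂ θ (1 - θ) hθpos.le (by linarith) (by ring)
          rw [← hmean] at hconv
          have hRtop : ENNReal.ofReal θ * I t + ENNReal.ofReal (1 - θ) * I t₂ ≠ ⊤ := by
            apply ENNReal.add_ne_top.2
            constructor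
            · exact ENNReal.mul_ne_top ENNReal.ofReal_ne_top htop
            · exact ENNReal.mul_ne_top ENNReal.ofReal_ne_top ht₂top
          have hIptop : I p ≠ ⊤ := (lt_of_le_of_lt hconv (lt_top_iff_ne_top.2 hRtop)).ne
          have hu2 : u ≤ (I p).toReal := by
            have := hCP
            rw [coe_ennreal_fin hIptop, EReal.coe_le_coe_iff] at this
            exact this
          have htr : (I p).toReal ≤ θ * A + (1 - θ) * B := by
            have h2 := ENNReal.toReal_mono hRtop hconv
            rw [ENNReal.toReal_add (ENNReal.mul_ne_top ENNReal.ofReal_ne_top htop)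
                (ENNReal.mul_ne_top ENNReal.ofReal_ne_top ht₂top),
              ENNReal.toReal_mul, ENNReal.toReal_mul,
              ENNReal.toReal_ofReal hθpos.le, ENNReal.toReal_ofReal (by linarith)] at h2
            exact h2
          have hkey : (d₁ + d₂) * u ≤ d₂ * A + d₁ * B := by
            have h3 : u ≤ θ * A + (1 - θ) * B := le_trans hu2 htr
            rw [hθ] at h3
            have h4 : (1 : ℝ) - d₂ / (d₁ + d₂) = d₁ / (d₁ + d₂) := by
              field_simp
              ring
            rw [h4, div_mul_eq_mul_div, div_mul_eq_mul_div, ← add_div,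
              le_div_iff₀ (by linarith : (0:ℝ) < d₁ + d₂)] at h3
            linarith
          -- conclude quotient inequality
          have hq2 : (u - A) * d₂ ≤ (B - u) * d₁ := by nlinarith [hkey]
          have ht₁ : t - p = -d₁ := by rw [hd₁]; ring
          rw [ht₁, div_neg, ← neg_div, neg_sub, div_le_div_iff₀ hd₁pos hd₂pos]
          linarith
        have : u - β * (p - t) ≤ A := by
          rw [div_le_iff_of_neg (by linarith : t - p < 0)] at hq
          have h6 : β * (p - t) = -(β * (t - p)) := by ring
          rw [h6]; linarith
        exact this
    · subst htp
      have := hCP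
      simpa using this
    · by_cases htop : I t = ⊤
      · rw [htop, EReal.coe_ennreal_top]; exact le_top
      · rw [coe_ennreal_fin htop, EReal.coe_le_coe_iff]
        have hmem : ((I t).toReal - u) / (t - p) ∈ S₂ := ⟨t, htp, htop, rfl⟩
        have h7 := csInf_le hbdd hmem
        rw [← hβ] at h7
        rw [le_div_iff₀ (by linarith : (0:ℝ) < t - p)] at h7
        have h6 : β * (p - t) = -(β * (t - p)) := by ring
        rw [h6]; linarith
  · -- use α = δ
    refine ⟨δ, hδpos, hδlt1.le, ?_⟩
    have hline : ∀ t : ℝ, (1 - δ) * u + δ * c - δ * t = u + δ * (p - t) := by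
      intro t; rw [hp]; ring
    intro t
    rw [hline t]
    rcases le_or_gt t p with htp | htp
    · exact hCL t htp
    · by_cases htop : I t = ⊤
      · rw [htop, EReal.coe_ennreal_top]; exact le_top
      · rw [coe_ennreal_fin htop, EReal.coe_le_coe_iff]
        have hmem : ((I t).toReal - u) / (t - p) ∈ S₂ := ⟨t, htp, htop, rfl⟩
        have hne : S₂.Nonempty := ⟨_, hmem⟩
        have hge : -δ ≤ sInf S₂ := by
          by_contra hcon
          exact hcase ⟨hne, by linarith⟩
        have h5 : -δ ≤ ((I t).toReal - u) / (t - p) := le_trans hge (csInf_le hbdd hmem)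
        rw [le_div_iff₀ (by linarith : (0:ℝ) < t - p)] at h5
        have h6 : u + δ * (p - t) = u + -δ * (t - p) := by ring
        rw [h6]; linarith

end HoeffdingAux

namespace HoeffdingAux

open Set

lemma bad_point (Ihat : ℝ → ℝ≥0∞) {s : ℝ}
    (h : (⨅ t ∈ Set.Ici s, (Ihat t : EReal)) ≠ ⨅ t ∈ Set.Ioi s, (Ihat t : EReal)) :
    (Ihat s : EReal) < ⨅ t ∈ Set.Ioi s, (Ihat t : EReal) := by
  have hIci : (⨅ t ∈ Set.Ici s, (Ihat t : EReal))
      = (Ihat s : EReal) ⊓ ⨅ t ∈ Set.Ioi s, (Ihat t : EReal) := by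
    rw [← Set.Ioi_insert, iInf_insert]
  by_contra hcon
  push_neg at hcon
  exact h (by rw [hIci, inf_eq_right.2 hcon])

lemma good_dichotomy (Ihat : ℝ → ℝ≥0∞)
    (hconv : ∀ x y p q : ℝ, 0 ≤ p → 0 ≤ q → p + q = 1 →
      Ihat (p * x + q * y) ≤ ENNReal.ofReal p * Ihat x + ENNReal.ofReal q * Ihat y)
    {s₁ s₂ : ℝ} (h12 : s₁ < s₂)
    (h1 : (⨅ t ∈ Set.Ici s₁, (Ihat t : EReal)) ≠ ⨅ t ∈ Set.Ioi s₁, (Ihat t : EReal))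
    (h2 : (⨅ t ∈ Set.Ici s₂, (Ihat t : EReal)) ≠ ⨅ t ∈ Set.Ioi s₂, (Ihat t : EReal)) :
    False := by
  have hA := bad_point Ihat h1
  have hB := bad_point Ihat h2
  set A := Ihat s₁ with hAdef
  set B := Ihat s₂ with hBdef
  have hAB : (A : EReal) < (B : EReal) :=
    lt_of_lt_of_le hA (biInf_le _ (by simp [Set.mem_Ioi, h12]))
  have hBtop : B ≠ ⊤ := by
    intro hB'
    have := lt_of_lt_of_le hB (le_top (α := EReal))
    rw [hB', EReal.coe_ennreal_top] at this
    exact lt_irrefl _ this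
  have hAtop : A ≠ ⊤ := by
    intro hA'
    rw [hA', EReal.coe_ennreal_top] at hAB
    exact not_top_lt hAB
  set A' := A.toReal with hA'
  set B' := B.toReal with hB'
  have hA'B' : A' ≤ B' := ENNReal.toReal_mono hBtop (by
    exact_mod_cast (EReal.coe_ennreal_le_coe_ennreal_iff.1 hAB.le))
  rw [coe_ennreal_fin hAtop, ← hA'] at hA
  obtain ⟨ρ, hρ1, hρ2⟩ := EReal.exists_between_coe_real hA
  rw [EReal.coe_lt_coe_iff] at hρ1
  set θ : ℝ := min (1/2) ((ρ - A') / (B' - A' + 1)) with hθ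
  have hθpos : 0 < θ := lt_min (by norm_num) (div_pos (by linarith) (by linarith))
  have hθlt1 : θ < 1 := lt_of_le_of_lt (min_le_left _ _) (by norm_num)
  set t : ℝ := (1 - θ) * s₁ + θ * s₂ with ht
  have hts : s₁ < t := by
    have : t - s₁ = θ * (s₂ - s₁) := by rw [ht]; ring
    nlinarith
  have hconvt : Ihat t ≤ ENNReal.ofReal (1 - θ) * A + ENNReal.ofReal θ * B :=
    hconv s₁ s₂ (1 - θ) θ (by linarith) hθpos.le (by ring)
  have hRtop : ENNReal.ofReal (1 - θ) * A + ENNReal.ofReal θ * B ≠ ⊤ :=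
    ENNReal.add_ne_top.2 ⟨ENNReal.mul_ne_top ENNReal.ofReal_ne_top hAtop,
      ENNReal.mul_ne_top ENNReal.ofReal_ne_top hBtop⟩
  have httop : Ihat t ≠ ⊤ := (lt_of_le_of_lt hconvt (lt_top_iff_ne_top.2 hRtop)).ne
  have htR : (Ihat t).toReal ≤ (1 - θ) * A' + θ * B' := by
    have := ENNReal.toReal_mono hRtop hconvt
    rwa [ENNReal.toReal_add (ENNReal.mul_ne_top ENNReal.ofReal_ne_top hAtop)
        (ENNReal.mul_ne_top ENNReal.ofReal_ne_top hBtop),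
      ENNReal.toReal_mul, ENNReal.toReal_mul,
      ENNReal.toReal_ofReal (by linarith), ENNReal.toReal_ofReal hθpos.le] at this
  have hval : (1 - θ) * A' + θ * B' < ρ := by
    have hθle : θ ≤ (ρ - A') / (B' - A' + 1) := min_le_right _ _
    have h3 : θ * (B' - A' + 1) ≤ ρ - A' := by
      rw [← le_div_iff₀ (by linarith : (0:ℝ) < B' - A' + 1)]
      exact hθle
    nlinarith
  have hfinal : (⨅ t' ∈ Set.Ioi s₁, (Ihat t' : EReal)) ≤ ((ρ : ℝ) : EReal) := by
    refine le_trans (biInf_le _ (Set.mem_Ioi.2 hts)) ?_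
    rw [coe_ennreal_fin httop, EReal.coe_le_coe_iff]
    linarith
  exact absurd (lt_of_le_of_lt hfinal hρ2) (lt_irrefl _)

end HoeffdingAux

namespace HoeffdingAux

open Filter MeasureTheory
open scoped ENNReal

lemma coe_inv_form (ρ : ℝ) : ((ρ : EReal))⁻¹ = ((ρ⁻¹ : ℝ) : EReal) := rfl

lemma scale_log_le {ρ : ℝ} (hρ : 0 < ρ) {X Y : ℝ≥0∞} (h : X ≤ Y) :
    ((ρ : EReal))⁻¹ * ENNReal.log X ≤ ((ρ : EReal))⁻¹ * ENNReal.log Y := by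
  rw [coe_inv_form]
  exact pos_mul_le_mono (inv_nonneg.2 hρ.le) (ENNReal.log_monotone h)

lemma scale_log_exp_mul {ρ : ℝ} (hρ : 0 < ρ) (a : ℝ) (Y : ℝ≥0∞) :
    ((ρ : EReal))⁻¹ * ENNReal.log (ENNReal.ofReal (Real.exp (a * ρ)) * Y)
      = (a : EReal) + ((ρ : EReal))⁻¹ * ENNReal.log Y := by
  rw [coe_inv_form, ENNReal.log_mul_add, ENNReal.log_ofReal_of_pos (Real.exp_pos _),
    Real.log_exp, pos_mul_add (inv_pos.2 hρ) (a * ρ) _]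
  congr 2
  field_simp

lemma scale_log_lt_exp {ρ : ℝ} (hρ : 0 < ρ) {X : ℝ≥0∞} {c : ℝ}
    (h : ((ρ : EReal))⁻¹ * ENNReal.log X < (c : EReal)) :
    X < ENNReal.ofReal (Real.exp (c * ρ)) := by
  rw [coe_inv_form, pos_mul_lt_iff (inv_pos.2 hρ)] at h
  have hcc : c / ρ⁻¹ = c * ρ := by field_simp
  rw [hcc] at h
  have : ENNReal.log X < ENNReal.log (ENNReal.ofReal (Real.exp (c * ρ))) := by
    rwa [ENNReal.log_ofReal_of_pos (Real.exp_pos _), Real.log_exp]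
  exact ENNReal.log_lt_log_iff.1 this

lemma exp_lt_scale_log {ρ : ℝ} (hρ : 0 < ρ) {X : ℝ≥0∞} {c : ℝ}
    (h : (c : EReal) < ((ρ : EReal))⁻¹ * ENNReal.log X) :
    ENNReal.ofReal (Real.exp (c * ρ)) < X := by
  rw [coe_inv_form, lt_pos_mul_iff (inv_pos.2 hρ)] at h
  have hcc : c / ρ⁻¹ = c * ρ := by field_simp
  rw [hcc] at h
  have : ENNReal.log (ENNReal.ofReal (Real.exp (c * ρ))) < ENNReal.log X := by
    rwa [ENNReal.log_ofReal_of_pos (Real.exp_pos _), Real.log_exp]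
  exact ENNReal.log_lt_log_iff.1 this

variable {ι : Type*} {l : Filter ι} [l.NeBot] {r : ι → ℝ}

lemma tendsto_coe_add {Z : ι → EReal} {E : EReal} (a : ℝ) (hZ : Tendsto Z l (nhds E)) :
    Tendsto (fun i => (a : EReal) + Z i) l (nhds ((a : EReal) + E)) := by
  have hc : ContinuousAt (fun p : EReal × EReal => p.1 + p.2) ((a : EReal), E) :=
    EReal.continuousAt_add (Or.inl (EReal.coe_ne_top a)) (Or.inl (EReal.coe_ne_bot a))
  exact hc.tendsto.comp (tendsto_const_nhds.prodMk_nhds hZ)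

lemma limsup_scale_of_bound (hrpos : ∀ i, 0 < r i) {W Z : ι → ℝ≥0∞} {a : ℝ} {E : EReal}
    (hW : Tendsto (fun i => ((r i : EReal))⁻¹ * ENNReal.log (W i)) l (nhds E))
    (hZW : ∀ i, Z i ≤ ENNReal.ofReal (Real.exp (a * r i)) * W i) :
    limsup (fun i => ((r i : EReal))⁻¹ * ENNReal.log (Z i)) l ≤ (a : EReal) + E := by
  have h1 : ∀ i, ((r i : EReal))⁻¹ * ENNReal.log (Z i)
      ≤ (a : EReal) + ((r i : EReal))⁻¹ * ENNReal.log (W i) := by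
    intro i
    calc ((r i : EReal))⁻¹ * ENNReal.log (Z i)
        ≤ ((r i : EReal))⁻¹ * ENNReal.log (ENNReal.ofReal (Real.exp (a * r i)) * W i) :=
          scale_log_le (hrpos i) (hZW i)
      _ = (a : EReal) + ((r i : EReal))⁻¹ * ENNReal.log (W i) :=
          scale_log_exp_mul (hrpos i) a (W i)
  calc limsup (fun i => ((r i : EReal))⁻¹ * ENNReal.log (Z i)) l
      ≤ limsup (fun i => (a : EReal) + ((r i : EReal))⁻¹ * ENNReal.log (W i)) l :=
        limsup_le_limsup (Eventually.of_forall h1)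
    _ = (a : EReal) + E := (tendsto_coe_add a hW).limsup_eq

lemma liminf_scale_ge (hrpos : ∀ i, 0 < r i) (hr : Tendsto r l atTop)
    {Z : ι → ℝ≥0∞} {a b : ℝ}
    (hZ : ∀ᶠ i in l, ENNReal.ofReal (Real.exp (a * r i + b)) ≤ Z i) :
    (a : EReal) ≤ liminf (fun i => ((r i : EReal))⁻¹ * ENNReal.log (Z i)) l := by
  have h1 : ∀ᶠ i in l, ((a + b * (r i)⁻¹ : ℝ) : EReal)
      ≤ ((r i : EReal))⁻¹ * ENNReal.log (Z i) := by
    filter_upwards [hZ] with i hi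
    have h2 : ((r i : EReal))⁻¹ * ENNReal.log (ENNReal.ofReal (Real.exp (a * r i + b)))
        = ((a + b * (r i)⁻¹ : ℝ) : EReal) := by
      rw [coe_inv_form, ENNReal.log_ofReal_of_pos (Real.exp_pos _), Real.log_exp, pos_mul_coe]
      congr 1
      have hne : r i ≠ 0 := (hrpos i).ne'
      field_simp
    rw [← h2]
    exact scale_log_le (hrpos i) hi
  have h3 : Tendsto (fun i => ((a + b * (r i)⁻¹ : ℝ) : EReal)) l (nhds ((a : ℝ) : EReal)) := by
    rw [EReal.tendsto_coe (m := fun i => a + b * (r i)⁻¹)]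
    have : Tendsto (fun i => b * (r i)⁻¹) l (nhds 0) := by
      have h4 : Tendsto (fun i => (r i)⁻¹) l (nhds 0) := tendsto_inv_atTop_zero.comp hr
      simpa using h4.const_mul b
    simpa using this.const_add a
  calc ((a : ℝ) : EReal)
      = liminf (fun i => ((a + b * (r i)⁻¹ : ℝ) : EReal)) l := h3.liminf_eq.symm
    _ ≤ liminf (fun i => ((r i : EReal))⁻¹ * ENNReal.log (Z i)) l := liminf_le_liminf h1

end HoeffdingAux

namespace HoeffdingAux

open MeasureTheory Filter Set
open scoped ENNReal

lemma inv_mul_lt_iff_real {ρ s σ' : ℝ} (hρ : 0 < ρ) : ρ⁻¹ * σ' < s ↔ σ' < s * ρ := by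
  rw [inv_mul_eq_div, div_lt_iff₀ hρ]

lemma le_inv_mul_iff_real {ρ s σ' : ℝ} (hρ : 0 < ρ) : s ≤ ρ⁻¹ * σ' ↔ s * ρ ≤ σ' := by
  rw [inv_mul_eq_div, le_div_iff₀ hρ]

lemma coe_sub_ennreal_nonpos {a : ℝ} {b : ℝ≥0∞} (h : (a : EReal) - (b : EReal) ≤ 0) :
    (a : EReal) ≤ (b : EReal) := by
  by_cases hb : b = ⊤
  · rw [hb, EReal.coe_ennreal_top]
    exact le_top
  · rw [coe_ennreal_fin hb] at h ⊢
    rw [← EReal.coe_sub] at h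
    rw [EReal.coe_le_coe_iff]
    have := EReal.coe_nonpos.1 h
    linarith

lemma coe_sub_ennreal_nonpos' {a : ℝ} {b : ℝ≥0∞} (h : (a : EReal) ≤ (b : EReal)) :
    (a : EReal) - (b : EReal) ≤ 0 := by
  by_cases hb : b = ⊤
  · rw [hb, EReal.coe_ennreal_top]
    rw [sub_eq_add_neg, EReal.neg_top, EReal.add_bot]
    exact bot_le
  · rw [coe_ennreal_fin hb] at h ⊢
    rw [← EReal.coe_sub]
    rw [EReal.coe_le_coe_iff] at h
    exact_mod_cast sub_nonpos.2 h

/-- The converse (lower) bound for the Hoeffding exponent. -/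
lemma need1
    {ι : Type*} (l : Filter ι) [l.NeBot]
    (r : ι → ℝ) (hrpos : ∀ i, 0 < r i) (hr : Tendsto r l atTop)
    (Ω : ι → Type*) [∀ i, MeasurableSpace (Ω i)]
    (P Phat : ∀ i, Measure (Ω i))
    (hPprob : ∀ i, IsProbabilityMeasure (P i))
    (hPhatprob : ∀ i, IsProbabilityMeasure (Phat i))
    (hac : ∀ i, P i ≪ Phat i) (hac' : ∀ i, Phat i ≪ P i)
    (I : ℝ → ℝ≥0∞)
    (hIconv : ∀ x y p q : ℝ, 0 ≤ p → 0 ≤ q → p + q = 1 →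
      I (p * x + q * y) ≤ ENNReal.ofReal p * I x + ENNReal.ofReal q * I y)
    (hLDPlow : ∀ a b : ℝ,
      -(⨅ s ∈ interior (Set.Ioo a b), (I s : EReal))
          ≤ liminf (fun i => ((r i)⁻¹ : EReal) *
              ENNReal.log (P i {x | (r i)⁻¹ * entropyProduction (P i) (Phat i) x ∈ Set.Ioo a b})) l)
    (e : ℝ → EReal)
    (he : ∀ α : ℝ, e α = ⨆ s : ℝ, ((α * s : ℝ) : EReal) - (I (-s) : EReal))
    (hIneg : ∀ t : ℝ, ((-t : ℝ) : EReal) ≤ (I t : EReal))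
    (f : ℝ → EReal)
    (hf : ∀ u : ℝ, f u = ⨆ α ∈ Set.Ioc (0 : ℝ) 1,
        ((α⁻¹ : ℝ) : EReal) * (((-(1 - α) * u : ℝ) : EReal) - e α))
    (hf0 : ∀ v : ℝ, (0 : EReal) ≤ f v)
    (hfneg : ∀ v : ℝ, v < 0 → f v = ⊤)
    (u : ℝ)
    (Γ : ∀ i, Set (Ω i)) (hΓmeas : ∀ i, MeasurableSet (Γ i))
    (hvalid : limsup (fun i => ((r i)⁻¹ : EReal) * ENNReal.log (P i (Γ i)ᶜ)) l < -(u : EReal)) :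
    -(f u) ≤ liminf (fun i => ((r i)⁻¹ : EReal) * ENNReal.log (Phat i (Γ i))) l := by
  have _ := fun i => hPprob i
  by_cases hftop : f u = ⊤
  · rw [hftop]
    rw [show -(⊤ : EReal) = ⊥ from rfl]
    exact bot_le
  have hu0 : 0 ≤ u := by
    by_contra hu
    push_neg at hu
    exact hftop (hfneg u hu)
  -- find a real strict level u' > u
  obtain ⟨z, hz1, hz2⟩ := EReal.exists_between_coe_real hvalid
  set u' : ℝ := -z with hu'def
  have huu' : u < u' := by
    rw [hu'def]
    have : (z : EReal) < ((-u : ℝ) : EReal) := by rwa [EReal.coe_neg]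
    rw [EReal.coe_lt_coe_iff] at this
    linarith
  have hvalid' : limsup (fun i => ((r i)⁻¹ : EReal) * ENNReal.log (P i (Γ i)ᶜ)) l
      < ((-u' : ℝ) : EReal) := by
    rw [hu'def]
    simpa using hz1
  refine ereal_le_forall fun c hc => ?_
  have hcf : f u < ((-c : ℝ) : EReal) := by
    rw [EReal.coe_neg]
    exact EReal.lt_neg_of_lt_neg hc
  have hc0 : c < 0 := by
    have h1 : -(f u) ≤ (0 : EReal) := by
      have := hf0 u
      rw [← neg_zero]
      exact EReal.neg_le_neg_iff.2 this
    have h2 : (c : EReal) < (0 : EReal) := lt_of_lt_of_le hc h1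
    exact_mod_cast h2
  have hcpos : (0:ℝ) < -c := by linarith
  by_cases hex : ∃ t : ℝ, I t < ENNReal.ofReal u' ∧ t + (I t).toReal < -c
  · -- the measure-theoretic estimate
    obtain ⟨t, htI, htc⟩ := hex
    have hIfin : I t ≠ ⊤ := htI.ne_top
    set Iv : ℝ := (I t).toReal with hIv
    have hIvnn : 0 ≤ Iv := ENNReal.toReal_nonneg
    have hIvu' : Iv < u' := by
      rw [hIv]
      exact (ENNReal.lt_ofReal_iff_toReal_lt hIfin).1 htI
    set η : ℝ := min ((-c - (t + Iv))/2) ((u' - Iv)/2) with hηdef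
    have hηpos : 0 < η := lt_min (by linarith) (by linarith)
    set w : ℝ := Iv + η with hwdef
    set b : ℝ := t + η with hbdef
    have hbw : b + w ≤ -c := by
      have h1 : η ≤ (-c - (t + Iv))/2 := min_le_left _ _
      rw [hbdef, hwdef]; linarith
    have hwu' : w < u' := by
      have h1 : η ≤ (u' - Iv)/2 := min_le_right _ _
      rw [hwdef]; linarith
    -- LDP lower bound on (t-1, b)
    have hliminfB : ((-w : ℝ) : EReal) < liminf (fun i => ((r i)⁻¹ : EReal) *
        ENNReal.log (P i {x | (r i)⁻¹ * entropyProduction (P i) (Phat i) x ∈ Set.Ioo (t-1) b})) l := by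
      refine lt_of_lt_of_le ?_ (hLDPlow (t-1) b)
      rw [isOpen_Ioo.interior_eq]
      have h2 : (⨅ s ∈ Set.Ioo (t-1) b, (I s : EReal)) ≤ (I t : EReal) :=
        biInf_le _ ⟨by linarith, by rw [hbdef]; linarith⟩
      have h3 : (I t : EReal) < ((w : ℝ) : EReal) := by
        rw [coe_ennreal_fin hIfin, EReal.coe_lt_coe_iff, ← hIv, hwdef]
        linarith
      have h4 : (⨅ s ∈ Set.Ioo (t-1) b, (I s : EReal)) < ((w : ℝ) : EReal) :=
        lt_of_le_of_lt h2 h3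
      calc ((-w : ℝ) : EReal) = -((w : ℝ) : EReal) := by rw [EReal.coe_neg]
        _ < -(⨅ s ∈ Set.Ioo (t-1) b, (I s : EReal)) := EReal.neg_lt_neg_iff.2 h4
    have hevB := eventually_lt_of_lt_liminf hliminfB
    have hevC := eventually_lt_of_limsup_lt hvalid'
    have hevR : ∀ᶠ i in l, Real.log 2 ≤ (u' - w) * r i := by
      have hpos : 0 < u' - w := by linarith
      filter_upwards [hr.eventually (eventually_ge_atTop (Real.log 2 / (u' - w)))] with i hi
      calc Real.log 2 = (Real.log 2 / (u' - w)) * (u' - w) := by field_simp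
        _ ≤ r i * (u' - w) := by
            apply mul_le_mul_of_nonneg_right hi (by linarith)
        _ = (u' - w) * r i := by ring
    have hmain : ∀ᶠ i in l, ENNReal.ofReal (Real.exp ((-(b+w)) * r i + (-Real.log 2)))
        ≤ Phat i (Γ i) := by
      filter_upwards [hevB, hevC, hevR] with i hB hC hR
      have hprob := hPprob i
      have hprob' := hPhatprob i
      set Bi : Set (Ω i) :=
        {x | (r i)⁻¹ * entropyProduction (P i) (Phat i) x ∈ Set.Ioo (t-1) b} with hBidef
      have hσm : Measurable fun x => (r i)⁻¹ * entropyProduction (P i) (Phat i) x :=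
        (measurable_entropyProduction _ _).const_mul _
      have hBmeas : MeasurableSet Bi := hσm measurableSet_Ioo
      have hB' : ENNReal.ofReal (Real.exp (-w * r i)) < P i Bi :=
        exp_lt_scale_log (hrpos i) hB
      have hC' : P i (Γ i)ᶜ < ENNReal.ofReal (Real.exp (-u' * r i)) :=
        scale_log_lt_exp (hrpos i) hC
      have h5 : P i Bi ≤ P i (Γ i ∩ Bi) + P i (Γ i)ᶜ := by
        refine le_trans (measure_mono ?_) (measure_union_le _ _)
        intro x hx
        by_cases hxg : x ∈ Γ i
        · exact Or.inl ⟨hxg, hx⟩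
        · exact Or.inr hxg
      have h6 : ENNReal.ofReal (Real.exp (-w * r i)) - ENNReal.ofReal (Real.exp (-u' * r i))
          ≤ P i (Γ i ∩ Bi) := by
        refine le_trans (tsub_le_tsub hB'.le hC'.le) ?_
        exact tsub_le_iff_right.2 h5
      have h7 : ENNReal.ofReal (Real.exp (-w * r i - Real.log 2))
          ≤ ENNReal.ofReal (Real.exp (-w * r i)) - ENNReal.ofReal (Real.exp (-u' * r i)) := by
        rw [← ENNReal.ofReal_sub _ (Real.exp_pos _).le]
        apply ENNReal.ofReal_le_ofReal
        have h8 : Real.exp (-u' * r i) ≤ Real.exp (-w * r i - Real.log 2) := by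
          apply Real.exp_le_exp.2
          nlinarith
        have h9 : Real.exp (-w * r i - Real.log 2) + Real.exp (-w * r i - Real.log 2)
            = Real.exp (-w * r i) := by
          rw [Real.exp_sub, Real.exp_log (by norm_num : (0:ℝ) < 2)]
          ring
        linarith
      have h10 : ∀ x ∈ Γ i ∩ Bi, entropyProduction (P i) (Phat i) x ≤ b * r i := by
        rintro x ⟨-, hx⟩
        have hx2 : (r i)⁻¹ * entropyProduction (P i) (Phat i) x < b := hx.2
        rw [inv_mul_lt_iff_real (hrpos i)] at hx2
        exact hx2.le
      have h11 := meas_ge_of_entropy_le (hac i) (hac' i) ((hΓmeas i).inter hBmeas) h10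
      calc ENNReal.ofReal (Real.exp ((-(b+w)) * r i + (-Real.log 2)))
          = ENNReal.ofReal (Real.exp (-(b * r i))) *
            ENNReal.ofReal (Real.exp (-w * r i - Real.log 2)) := by
            rw [← ENNReal.ofReal_mul (Real.exp_pos _).le, ← Real.exp_add]
            congr 1
            ring
        _ ≤ ENNReal.ofReal (Real.exp (-(b * r i))) * P i (Γ i ∩ Bi) :=
            mul_le_mul_right (le_trans h7 h6) _
        _ ≤ Phat i (Γ i ∩ Bi) := h11
        _ ≤ Phat i (Γ i) := measure_mono Set.inter_subset_left
    have hlower := liminf_scale_ge hrpos hr hmain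
    refine le_trans ?_ hlower
    rw [EReal.coe_le_coe_iff]
    linarith
  · -- no such t : duality gives a contradiction
    push_neg at hex
    obtain ⟨α, hα0, hα1, hαline⟩ := exists_line I hIconv hIneg huu' hu0 hcpos hex
    have heα : e α ≤ ((-(1-α)*u - α*(-c) : ℝ) : EReal) := by
      rw [he α]
      refine iSup_le fun s => ?_
      have h1 := hαline (-s)
      calc ((α * s : ℝ) : EReal) - (I (-s) : EReal)
          ≤ ((α * s : ℝ) : EReal) - (((1 - α) * u + α * (-c) - α * (-s) : ℝ) : EReal) :=
            EReal.sub_le_sub le_rfl h1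
        _ = ((-(1-α)*u - α*(-c) : ℝ) : EReal) := by
            rw [← EReal.coe_sub]
            congr 1
            ring
    have hterm : ((-c : ℝ) : EReal) ≤ f u := by
      rw [hf u]
      have hmem : α ∈ Set.Ioc (0:ℝ) 1 := ⟨hα0, hα1⟩
      refine le_trans ?_ (le_biSup _ hmem)
      have heq : ((-c : ℝ) : EReal) = ((α⁻¹ : ℝ) : EReal) *
          (((-(1-α)*u : ℝ) : EReal) - ((-(1-α)*u - α*(-c) : ℝ) : EReal)) := by
        rw [← EReal.coe_sub, pos_mul_coe, EReal.coe_eq_coe_iff]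
        field_simp
        ring
      rw [heq]
      exact pos_mul_le_mono (inv_nonneg.2 hα0.le) (EReal.sub_le_sub le_rfl heα)
    exact absurd (lt_of_le_of_lt hterm hcf) (lt_irrefl _)

end HoeffdingAux

namespace HoeffdingAux

open MeasureTheory Filter Set
open scoped ENNReal

/-- Achievability: for every real `T` above `-(f u)` there is a valid test family whose
`Phat`-exponent converges to a limit `≤ T`. -/
lemma achieve
    {ι : Type*} (l : Filter ι) [l.NeBot]
    (r : ι → ℝ) (hrpos : ∀ i, 0 < r i) (hr : Tendsto r l atTop)
    (Ω : ι → Type*) [∀ i, MeasurableSpace (Ω i)]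
    (P Phat : ∀ i, Measure (Ω i))
    (hPprob : ∀ i, IsProbabilityMeasure (P i))
    (hPhatprob : ∀ i, IsProbabilityMeasure (Phat i))
    (hac : ∀ i, P i ≪ Phat i) (hac' : ∀ i, Phat i ≪ P i)
    (Ihat : ℝ → ℝ≥0∞)
    (hIhatconv : ∀ x y p q : ℝ, 0 ≤ p → 0 ≤ q → p + q = 1 →
      Ihat (p * x + q * y) ≤ ENNReal.ofReal p * Ihat x + ENNReal.ofReal q * Ihat y)
    (hLDPhat : ∀ S : Set ℝ, MeasurableSet S →
      (-(⨅ s ∈ interior S, (Ihat s : EReal))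
          ≤ liminf (fun i => ((r i)⁻¹ : EReal) *
              ENNReal.log (Phat i {x | (r i)⁻¹ * entropyProduction (P i) (Phat i) x ∈ S})) l)
      ∧ (limsup (fun i => ((r i)⁻¹ : EReal) *
              ENNReal.log (Phat i {x | (r i)⁻¹ * entropyProduction (P i) (Phat i) x ∈ S})) l
          ≤ -(⨅ s ∈ closure S, (Ihat s : EReal))))
    (e : ℝ → EReal)
    (helim : ∀ α ∈ Set.Icc (0 : ℝ) 1,
      Tendsto (fun i => ((r i)⁻¹ : EReal) *
          ENNReal.log (∫⁻ x, ENNReal.ofReal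
            (Real.exp (-α * entropyProduction (P i) (Phat i) x)) ∂(P i))) l (nhds (e α)))
    (hele : ∀ α : ℝ, 0 < α → α ≤ 1 → e α ≤ 0)
    (f : ℝ → EReal)
    (hf : ∀ u : ℝ, f u = ⨆ α ∈ Set.Ioc (0 : ℝ) 1,
        ((α⁻¹ : ℝ) : EReal) * (((-(1 - α) * u : ℝ) : EReal) - e α))
    (u T : ℝ) (hT : -(f u) < (T : EReal)) :
    ∃ Γ : ∀ i, Set (Ω i), (∀ i, MeasurableSet (Γ i))
      ∧ limsup (fun i => ((r i)⁻¹ : EReal) * ENNReal.log (P i (Γ i)ᶜ)) l < -(u : EReal)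
      ∧ ∃ a : EReal, a ≤ (T : EReal)
          ∧ Tendsto (fun i => ((r i)⁻¹ : EReal) * ENNReal.log (Phat i (Γ i))) l (nhds a) := by
  -- extract a near-optimal α
  have hT0 : ((-T : ℝ) : EReal) < f u := by
    rw [EReal.coe_neg]
    exact EReal.neg_lt_of_neg_lt hT
  rw [hf u] at hT0
  obtain ⟨α, hα⟩ := lt_iSup_iff.1 hT0
  obtain ⟨hαmem, hα2⟩ := lt_iSup_iff.1 hα
  obtain ⟨hα0, hα1⟩ := hαmem
  -- general bounds for threshold tests
  have hmeasσ : ∀ i, Measurable fun x => (r i)⁻¹ * entropyProduction (P i) (Phat i) x :=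
    fun i => (measurable_entropyProduction _ _).const_mul _
  have hTest : ∀ s : ℝ,
      (limsup (fun i => ((r i)⁻¹ : EReal) * ENNReal.log
          (P i ({x | (r i)⁻¹ * entropyProduction (P i) (Phat i) x ∈ Set.Ici s}ᶜ))) l
        ≤ ((α * s : ℝ) : EReal) + e α)
      ∧ (limsup (fun i => ((r i)⁻¹ : EReal) * ENNReal.log
          (Phat i {x | (r i)⁻¹ * entropyProduction (P i) (Phat i) x ∈ Set.Ici s})) l
        ≤ ((-(1 - α) * s : ℝ) : EReal) + e α) := by
    intro s
    constructor
    · refine limsup_scale_of_bound hrpos (helim α ⟨hα0.le, hα1⟩) fun i => ?_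
      have hset : ({x | (r i)⁻¹ * entropyProduction (P i) (Phat i) x ∈ Set.Ici s}ᶜ : Set (Ω i))
          = {x | entropyProduction (P i) (Phat i) x < s * r i} := by
        ext x
        simp only [Set.mem_compl_iff, Set.mem_setOf_eq, Set.mem_Ici, not_le]
        exact inv_mul_lt_iff_real (hrpos i)
      rw [hset, show (α * s) * r i = α * (s * r i) by ring]
      exact chernoff_P (hac i) hα0.le (s * r i)
    · refine limsup_scale_of_bound hrpos (helim α ⟨hα0.le, hα1⟩) fun i => ?_
      have hset : ({x | (r i)⁻¹ * entropyProduction (P i) (Phat i) x ∈ Set.Ici s} : Set (Ω i))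
          = {x | s * r i ≤ entropyProduction (P i) (Phat i) x} := by
        ext x
        simp only [Set.mem_setOf_eq, Set.mem_Ici]
        exact le_inv_mul_iff_real (hrpos i)
      rw [hset, show (-(1 - α) * s) * r i = -((1 - α) * (s * r i)) by ring]
      exact chernoff_Q (hac i) (hac' i) hα0.le hα1 (s * r i)
  by_cases heb : e α = ⊥
  · -- degenerate case: any threshold works and everything converges to ⊥
    refine ⟨fun i => {x | (r i)⁻¹ * entropyProduction (P i) (Phat i) x ∈ Set.Ici 0},
      fun i => (hmeasσ i) measurableSet_Ici, ?_, ⊥, bot_le, ?_⟩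
    · have h1 := (hTest 0).1
      rw [heb, EReal.add_bot] at h1
      refine lt_of_le_of_lt h1 ?_
      rw [show -(u : EReal) = ((-u : ℝ) : EReal) by rw [EReal.coe_neg]]
      exact bot_lt_iff_ne_bot.2 (EReal.coe_ne_bot _)
    · have h2 := (hTest 0).2
      rw [heb, EReal.add_bot, le_bot_iff] at h2
      have h3 : liminf (fun i => ((r i)⁻¹ : EReal) * ENNReal.log
          (Phat i {x | (r i)⁻¹ * entropyProduction (P i) (Phat i) x ∈ Set.Ici 0})) l = ⊥ :=
        le_bot_iff.1 (le_trans (liminf_le_limsup) h2.le)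
      exact tendsto_of_liminf_eq_limsup h3 h2
  · have hetop : e α ≠ ⊤ := by
      intro h
      have := hele α hα0 hα1
      rw [h] at this
      exact absurd this (by simp)
    set E : ℝ := (e α).toReal with hEdef
    have heE : e α = ((E : ℝ) : EReal) := (EReal.coe_toReal hetop heb).symm
    have hα2' : -T < α⁻¹ * (-(1-α)*u - E) := by
      rw [heE, ← EReal.coe_sub, pos_mul_coe, EReal.coe_lt_coe_iff] at hα2
      exact hα2
    set G : ℝ := α⁻¹ * (-(1-α)*u - E) with hGdef
    set η : ℝ := α * (T + G) / 2 with hηdef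
    have hηpos : 0 < η := by
      rw [hηdef]
      have : 0 < T + G := by linarith
      positivity
    set s₀ : ℝ := (-u - E - η)/α with hs₀def
    have hαs₀ : α * s₀ = -u - E - η := by
      rw [hs₀def]
      field_simp
    have hαG : α * G = -(1-α)*u - E := by
      rw [hGdef]
      field_simp
    have hη2 : α * (T + G) = 2 * η := by rw [hηdef]; ring
    set V : ℝ := -(1-α)*s₀ + E with hVdef
    have hVT : V < T := by
      have h12 : α * V < α * T := by
        have hexp : α * V = -(1-α)*(α*s₀) + α*E := by rw [hVdef]; ring
        rw [hexp, hαs₀]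
        nlinarith [hηpos, hα1, hα0]
      exact lt_of_mul_lt_mul_left h12 hα0.le
    set κ : ℝ := min 1 ((T - V)/2) with hκdef
    have hκpos : 0 < κ := lt_min (by norm_num) (by linarith)
    have hκle : κ ≤ (T - V)/2 := min_le_right _ _
    -- validity and value bounds for both thresholds
    have hval : ∀ s : ℝ, s ≤ s₀ →
        limsup (fun i => ((r i)⁻¹ : EReal) * ENNReal.log
          (P i ({x | (r i)⁻¹ * entropyProduction (P i) (Phat i) x ∈ Set.Ici s}ᶜ))) l
          < -(u : EReal) := by
      intro s hs
      refine lt_of_le_of_lt (hTest s).1 ?_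
      rw [heE, ← EReal.coe_add, show -(u : EReal) = ((-u : ℝ) : EReal) by rw [EReal.coe_neg],
        EReal.coe_lt_coe_iff]
      have : α * s ≤ α * s₀ := mul_le_mul_of_nonneg_left hs hα0.le
      rw [hαs₀] at this
      linarith
    have hvalue : ∀ s : ℝ, s₀ - κ ≤ s →
        limsup (fun i => ((r i)⁻¹ : EReal) * ENNReal.log
          (Phat i {x | (r i)⁻¹ * entropyProduction (P i) (Phat i) x ∈ Set.Ici s})) l
          ≤ ((T : ℝ) : EReal) := by
      intro s hs
      refine le_trans (hTest s).2 ?_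
      rw [heE, ← EReal.coe_add, EReal.coe_le_coe_iff]
      have h13 : -(1-α)*s + E ≤ -(1-α)*(s₀ - κ) + E := by
        have : (1-α)*(s₀ - κ) ≤ (1-α)*s := mul_le_mul_of_nonneg_left hs (by linarith)
        linarith
      have h14 : -(1-α)*(s₀ - κ) + E = V + (1-α)*κ := by rw [hVdef]; ring
      have h15 : (1-α)*κ ≤ κ := by nlinarith
      linarith
    -- choose a good threshold among s₀ and s₀ - κ
    have hpick : ∃ s : ℝ, s ≤ s₀ ∧ s₀ - κ ≤ s ∧
        (⨅ t ∈ Set.Ici s, (Ihat t : EReal)) = (⨅ t ∈ Set.Ioi s, (Ihat t : EReal)) := by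
      by_cases hgood : (⨅ t ∈ Set.Ici s₀, (Ihat t : EReal)) = ⨅ t ∈ Set.Ioi s₀, (Ihat t : EReal)
      · exact ⟨s₀, le_rfl, by linarith, hgood⟩
      · refine ⟨s₀ - κ, by linarith, le_rfl, ?_⟩
        by_contra h2
        exact good_dichotomy Ihat hIhatconv (by linarith : s₀ - κ < s₀) h2 hgood
    obtain ⟨s, hss₀, hs₀κ, hgood⟩ := hpick
    refine ⟨fun i => {x | (r i)⁻¹ * entropyProduction (P i) (Phat i) x ∈ Set.Ici s},
      fun i => (hmeasσ i) measurableSet_Ici, hval s hss₀, ?_⟩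
    have hLDP1 := (hLDPhat (Set.Ici s) measurableSet_Ici).1
    have hLDP2 := (hLDPhat (Set.Ici s) measurableSet_Ici).2
    rw [interior_Ici, ← hgood] at hLDP1
    rw [closure_Ici] at hLDP2
    refine ⟨-(⨅ t ∈ Set.Ici s, (Ihat t : EReal)), ?_, ?_⟩
    · calc -(⨅ t ∈ Set.Ici s, (Ihat t : EReal))
          ≤ liminf (fun i => ((r i)⁻¹ : EReal) * ENNReal.log
              (Phat i {x | (r i)⁻¹ * entropyProduction (P i) (Phat i) x ∈ Set.Ici s})) l := hLDP1
        _ ≤ limsup (fun i => ((r i)⁻¹ : EReal) * ENNReal.log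
              (Phat i {x | (r i)⁻¹ * entropyProduction (P i) (Phat i) x ∈ Set.Ici s})) l :=
            liminf_le_limsup
        _ ≤ ((T : ℝ) : EReal) := hvalue s hs₀κ
    · exact tendsto_of_le_liminf_of_limsup_le hLDP1 hLDP2

end HoeffdingAux

/-- **Hoeffding error exponents.**
Assume the laws of `r_λ⁻¹σ_λ` under `P_λ` and under `P̂_λ` satisfy the full LDP with
scale `r_λ` and convex, lower semicontinuous rates `I`, `Î`, and that the entropic
pressure `e(α) = sup_s (αs − I(−s))` equals `lim r_λ⁻¹ log ∫ e^{−ασ_λ} dP_λ` for every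
`α ∈ [0,1]`.  Then for every `u ∈ ℝ` the three Hoeffding exponents `𝔥̲(u)`, `𝔥̄(u)`,
`𝔥(u)` (infima of `liminf`/`limsup`/`lim` of `r_λ⁻¹ log P̂_λ(Γ_λ)` over families with
`limsup r_λ⁻¹ log P_λ(Γ_λᶜ) < −u`) coincide and equal `−f(u)`, where
`f(u) = sup_{α∈(0,1]} α⁻¹(−(1−α)u − e(α))`. -/
theorem hoeffding_exponents
    {ι : Type*} (l : Filter ι) [l.NeBot]
    (r : ι → ℝ) (hrpos : ∀ i, 0 < r i) (hr : Tendsto r l atTop)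
    (Ω : ι → Type*) [∀ i, MeasurableSpace (Ω i)]
    (P Phat : ∀ i, Measure (Ω i))
    (hPprob : ∀ i, IsProbabilityMeasure (P i))
    (hPhatprob : ∀ i, IsProbabilityMeasure (Phat i))
    (hac : ∀ i, P i ≪ Phat i) (hac' : ∀ i, Phat i ≪ P i)
    (I Ihat : ℝ → ℝ≥0∞)
    (hIconv : ∀ x y p q : ℝ, 0 ≤ p → 0 ≤ q → p + q = 1 →
      I (p * x + q * y) ≤ ENNReal.ofReal p * I x + ENNReal.ofReal q * I y)
    (hIhatconv : ∀ x y p q : ℝ, 0 ≤ p → 0 ≤ q → p + q = 1 →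
      Ihat (p * x + q * y) ≤ ENNReal.ofReal p * Ihat x + ENNReal.ofReal q * Ihat y)
    (hIlsc : LowerSemicontinuous I) (hIhatlsc : LowerSemicontinuous Ihat)
    (hLDP : ∀ S : Set ℝ, MeasurableSet S →
      (-(⨅ s ∈ interior S, (I s : EReal))
          ≤ liminf (fun i => ((r i)⁻¹ : EReal) *
              ENNReal.log (P i {x | (r i)⁻¹ * entropyProduction (P i) (Phat i) x ∈ S})) l)
      ∧ (limsup (fun i => ((r i)⁻¹ : EReal) *
              ENNReal.log (P i {x | (r i)⁻¹ * entropyProduction (P i) (Phat i) x ∈ S})) l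
          ≤ -(⨅ s ∈ closure S, (I s : EReal))))
    (hLDPhat : ∀ S : Set ℝ, MeasurableSet S →
      (-(⨅ s ∈ interior S, (Ihat s : EReal))
          ≤ liminf (fun i => ((r i)⁻¹ : EReal) *
              ENNReal.log (Phat i {x | (r i)⁻¹ * entropyProduction (P i) (Phat i) x ∈ S})) l)
      ∧ (limsup (fun i => ((r i)⁻¹ : EReal) *
              ENNReal.log (Phat i {x | (r i)⁻¹ * entropyProduction (P i) (Phat i) x ∈ S})) l
          ≤ -(⨅ s ∈ closure S, (Ihat s : EReal))))
    (e : ℝ → EReal)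
    (he : ∀ α : ℝ, e α = ⨆ s : ℝ, ((α * s : ℝ) : EReal) - (I (-s) : EReal))
    (helim : ∀ α ∈ Set.Icc (0 : ℝ) 1,
      Tendsto (fun i => ((r i)⁻¹ : EReal) *
          ENNReal.log (∫⁻ x, ENNReal.ofReal
            (Real.exp (-α * entropyProduction (P i) (Phat i) x)) ∂(P i))) l (nhds (e α)))
    (f : ℝ → EReal)
    (hf : ∀ u : ℝ, f u = ⨆ α ∈ Set.Ioc (0 : ℝ) 1,
        ((α⁻¹ : ℝ) : EReal) * (((-(1 - α) * u : ℝ) : EReal) - e α)) :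
    ∀ u : ℝ,
      sInf {a : EReal | ∃ Γ : ∀ i, Set (Ω i),
          (∀ i, MeasurableSet (Γ i))
          ∧ limsup (fun i => ((r i)⁻¹ : EReal) * ENNReal.log (P i (Γ i)ᶜ)) l < -(u : EReal)
          ∧ a = liminf (fun i => ((r i)⁻¹ : EReal) * ENNReal.log (Phat i (Γ i))) l}
        = -(f u)
      ∧ sInf {a : EReal | ∃ Γ : ∀ i, Set (Ω i),
          (∀ i, MeasurableSet (Γ i))
          ∧ limsup (fun i => ((r i)⁻¹ : EReal) * ENNReal.log (P i (Γ i)ᶜ)) l < -(u : EReal)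
          ∧ a = limsup (fun i => ((r i)⁻¹ : EReal) * ENNReal.log (Phat i (Γ i))) l}
        = -(f u)
      ∧ sInf {a : EReal | ∃ Γ : ∀ i, Set (Ω i),
          (∀ i, MeasurableSet (Γ i))
          ∧ limsup (fun i => ((r i)⁻¹ : EReal) * ENNReal.log (P i (Γ i)ᶜ)) l < -(u : EReal)
          ∧ Tendsto (fun i => ((r i)⁻¹ : EReal) * ENNReal.log (Phat i (Γ i))) l (nhds a)}
        = -(f u) := by
  intro u
  classical
  have _inst : ∀ i, IsProbabilityMeasure (P i) := hPprob
  have _inst' : ∀ i, IsProbabilityMeasure (Phat i) := hPhatprob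
  -- `e 1 = 0`
  have he1 : e 1 = 0 := by
    have h1 := helim 1 (by norm_num : (1:ℝ) ∈ Set.Icc (0:ℝ) 1)
    have heq : (fun i => ((r i)⁻¹ : EReal) * ENNReal.log (∫⁻ x, ENNReal.ofReal
        (Real.exp (-(1:ℝ) * entropyProduction (P i) (Phat i) x)) ∂(P i)))
        = fun _ : ι => (0 : EReal) := by
      funext i
      have := integral_exp_neg_entropy (hac i) (hac' i)
      rw [this, ENNReal.log_one, mul_zero]
    rw [heq] at h1
    exact (tendsto_nhds_unique h1 tendsto_const_nhds)
  -- `I t ≥ -t`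
  have hIneg : ∀ t : ℝ, ((-t : ℝ) : EReal) ≤ (I t : EReal) := by
    intro t
    have h1 : ((1 * -t : ℝ) : EReal) - (I (- -t) : EReal) ≤ 0 := by
      calc ((1 * -t : ℝ) : EReal) - (I (- -t) : EReal)
          ≤ ⨆ s : ℝ, ((1 * s : ℝ) : EReal) - (I (-s) : EReal) :=
            le_iSup (fun s : ℝ => ((1 * s : ℝ) : EReal) - (I (-s) : EReal)) (-t)
        _ = 0 := by rw [← he 1, he1]
    rw [neg_neg, one_mul] at h1
    exact HoeffdingAux.coe_sub_ennreal_nonpos h1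
  -- `e ≤ 0` on `(0,1]`
  have hele : ∀ α : ℝ, 0 < α → α ≤ 1 → e α ≤ 0 := by
    intro α hα0 hα1
    rw [he α]
    refine iSup_le fun s => ?_
    refine HoeffdingAux.coe_sub_ennreal_nonpos' ?_
    rcases le_or_gt s 0 with hs | hs
    · calc ((α * s : ℝ) : EReal) ≤ ((0 : ℝ) : EReal) := by
            exact_mod_cast mul_nonpos_of_nonneg_of_nonpos hα0.le hs
        _ ≤ (I (-s) : EReal) := by
            rw [EReal.coe_zero]
            exact EReal.coe_ennreal_nonneg _
    · calc ((α * s : ℝ) : EReal) ≤ ((s : ℝ) : EReal) := by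
            exact_mod_cast (by nlinarith : α * s ≤ s)
        _ = ((-(-s) : ℝ) : EReal) := by norm_num
        _ ≤ (I (-s) : EReal) := hIneg (-s)
  -- `f ≥ 0`
  have hf0 : ∀ v : ℝ, (0 : EReal) ≤ f v := by
    intro v
    rw [hf v]
    have h1 : ((((1:ℝ))⁻¹ : ℝ) : EReal) * (((-(1-(1:ℝ))*v : ℝ) : EReal) - e 1) = 0 := by
      rw [he1]
      norm_num
    refine le_trans (le_of_eq h1.symm)
      (le_biSup (f := fun α : ℝ => ((α⁻¹ : ℝ) : EReal) * (((-(1 - α) * v : ℝ) : EReal) - e α))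
        (show (1:ℝ) ∈ Set.Ioc (0:ℝ) 1 by norm_num))
  -- `f v = ⊤` for `v < 0`
  have hfneg : ∀ v : ℝ, v < 0 → f v = ⊤ := by
    intro v hv
    refine HoeffdingAux.ereal_top_forall fun c => ?_
    obtain ⟨M, hMpos, hMc⟩ : ∃ M : ℝ, 0 < M ∧ c ≤ M :=
      ⟨max c 0 + 1, by positivity, by linarith [le_max_left c 0]⟩
    obtain ⟨v', hv'pos, hvv⟩ : ∃ v' : ℝ, 0 < v' ∧ v = -v' := ⟨-v, by linarith, by ring⟩
    set α : ℝ := v' / (M + v') with hα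
    have hα0 : 0 < α := div_pos hv'pos (by linarith)
    have hα1 : α < 1 := (div_lt_one (by linarith)).2 (by linarith)
    have hαM : α⁻¹ * (-(1-α)*v) = M := by
      rw [hα, hvv]
      have h1 : M + v' ≠ 0 := by linarith
      field_simp
      ring
    rw [hf v]
    calc (c : EReal) ≤ ((M : ℝ) : EReal) := by exact_mod_cast hMc
      _ = ((α⁻¹ : ℝ) : EReal) * (((-(1 - α) * v : ℝ) : EReal) - 0) := by
          rw [sub_eq_add_neg, neg_zero, add_zero, HoeffdingAux.pos_mul_coe, hαM]
      _ ≤ ((α⁻¹ : ℝ) : EReal) * (((-(1 - α) * v : ℝ) : EReal) - e α) :=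
          HoeffdingAux.pos_mul_le_mono (inv_nonneg.2 hα0.le)
            (EReal.sub_le_sub le_rfl (hele α hα0 hα1.le))
      _ ≤ ⨆ α ∈ Set.Ioc (0:ℝ) 1, ((α⁻¹ : ℝ) : EReal) * (((-(1 - α) * v : ℝ) : EReal) - e α) :=
          le_biSup (f := fun α : ℝ => ((α⁻¹ : ℝ) : EReal) *
            (((-(1 - α) * v : ℝ) : EReal) - e α)) (Set.mem_Ioc.2 ⟨hα0, hα1.le⟩)
  -- converse bound for arbitrary valid tests
  have hN : ∀ Γ : ∀ i, Set (Ω i), (∀ i, MeasurableSet (Γ i)) →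
      limsup (fun i => ((r i)⁻¹ : EReal) * ENNReal.log (P i (Γ i)ᶜ)) l < -(u : EReal) →
      -(f u) ≤ liminf (fun i => ((r i)⁻¹ : EReal) * ENNReal.log (Phat i (Γ i))) l := by
    intro Γ hm hv
    exact HoeffdingAux.need1 l r hrpos hr Ω P Phat hPprob hPhatprob hac hac' I hIconv
      (fun a b => (hLDP _ measurableSet_Ioo).1) e he hIneg f hf hf0 hfneg u Γ hm hv
  -- achievability
  have hA : ∀ T : ℝ, -(f u) < (T : EReal) →
      ∃ Γ : ∀ i, Set (Ω i), (∀ i, MeasurableSet (Γ i))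
        ∧ limsup (fun i => ((r i)⁻¹ : EReal) * ENNReal.log (P i (Γ i)ᶜ)) l < -(u : EReal)
        ∧ ∃ a : EReal, a ≤ (T : EReal)
            ∧ Tendsto (fun i => ((r i)⁻¹ : EReal) * ENNReal.log (Phat i (Γ i))) l (nhds a) := by
    intro T hT
    exact HoeffdingAux.achieve l r hrpos hr Ω P Phat hPprob hPhatprob hac hac'
      Ihat hIhatconv hLDPhat e helim hele f hf u T hT
  refine ⟨?_, ?_, ?_⟩
  · refine le_antisymm ?_ (le_sInf ?_)
    · refine le_of_forall_gt_imp_ge_of_dense fun cE hcE => ?_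
      obtain ⟨T, hT1, hT2⟩ := EReal.exists_between_coe_real hcE
      obtain ⟨Γ, hm, hv, a, haT, hconv⟩ := hA T hT1
      calc sInf {a : EReal | ∃ Γ : ∀ i, Set (Ω i),
            (∀ i, MeasurableSet (Γ i))
            ∧ limsup (fun i => ((r i)⁻¹ : EReal) * ENNReal.log (P i (Γ i)ᶜ)) l < -(u : EReal)
            ∧ a = liminf (fun i => ((r i)⁻¹ : EReal) * ENNReal.log (Phat i (Γ i))) l}
          ≤ liminf (fun i => ((r i)⁻¹ : EReal) * ENNReal.log (Phat i (Γ i))) l :=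
            sInf_le ⟨Γ, hm, hv, rfl⟩
        _ = a := hconv.liminf_eq
        _ ≤ (T : EReal) := haT
        _ ≤ cE := hT2.le
    · rintro a ⟨Γ, hm, hv, rfl⟩
      exact hN Γ hm hv
  · refine le_antisymm ?_ (le_sInf ?_)
    · refine le_of_forall_gt_imp_ge_of_dense fun cE hcE => ?_
      obtain ⟨T, hT1, hT2⟩ := EReal.exists_between_coe_real hcE
      obtain ⟨Γ, hm, hv, a, haT, hconv⟩ := hA T hT1
      calc sInf {a : EReal | ∃ Γ : ∀ i, Set (Ω i),
            (∀ i, MeasurableSet (Γ i))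
            ∧ limsup (fun i => ((r i)⁻¹ : EReal) * ENNReal.log (P i (Γ i)ᶜ)) l < -(u : EReal)
            ∧ a = limsup (fun i => ((r i)⁻¹ : EReal) * ENNReal.log (Phat i (Γ i))) l}
          ≤ limsup (fun i => ((r i)⁻¹ : EReal) * ENNReal.log (Phat i (Γ i))) l :=
            sInf_le ⟨Γ, hm, hv, rfl⟩
        _ = a := hconv.limsup_eq
        _ ≤ (T : EReal) := haT
        _ ≤ cE := hT2.le
    · rintro a ⟨Γ, hm, hv, rfl⟩
      exact le_trans (hN Γ hm hv) liminf_le_limsup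
  · refine le_antisymm ?_ (le_sInf ?_)
    · refine le_of_forall_gt_imp_ge_of_dense fun cE hcE => ?_
      obtain ⟨T, hT1, hT2⟩ := EReal.exists_between_coe_real hcE
      obtain ⟨Γ, hm, hv, a, haT, hconv⟩ := hA T hT1
      calc sInf {a : EReal | ∃ Γ : ∀ i, Set (Ω i),
            (∀ i, MeasurableSet (Γ i))
            ∧ limsup (fun i => ((r i)⁻¹ : EReal) * ENNReal.log (P i (Γ i)ᶜ)) l < -(u : EReal)
            ∧ Tendsto (fun i => ((r i)⁻¹ : EReal) * ENNReal.log (Phat i (Γ i))) l (nhds a)}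
          ≤ a := sInf_le ⟨Γ, hm, hv, hconv⟩
        _ ≤ (T : EReal) := haT
        _ ≤ cE := hT2.le
    · rintro a ⟨Γ, hm, hv, hconv⟩
      calc -(f u) ≤ liminf (fun i => ((r i)⁻¹ : EReal) * ENNReal.log (Phat i (Γ i))) l :=
            hN Γ hm hv
        _ = a := hconv.liminf_eq
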